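/- Let X be a real random variable with log moment generating function Λ finite everywhere, and let a = essinf X. For any λ ∈ ℝ, Λ'(λ) ≥ a; moreover if a > −∞ then Λ'(λ) → a as λ → −∞. -/

import Mathlib

open MeasureTheory Real Filter

lemma aux_exp_between {u s v x : ℝ} (h1 : u ≤ s) (h2 : s ≤ v) :
    Real.exp (s * x) ≤ Real.exp (u * x) + Real.exp (v * x) := by
  rcases le_or_gt 0 x with hx | hx
  · have : Real.exp (s * x) ≤ Real.exp (v * x) :=
      Real.exp_le_exp.2 (mul_le_mul_of_nonneg_right h2 hx)
    linarith [Real.exp_pos (u * x)]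
  · have : Real.exp (s * x) ≤ Real.exp (u * x) :=
      Real.exp_le_exp.2 (mul_le_mul_of_nonpos_right h1 hx.le)
    linarith [Real.exp_pos (v * x)]

lemma aux_abs_le {x : ℝ} : |x| ≤ Real.exp x + Real.exp (-x) := by
  rcases abs_cases x with ⟨h, _⟩ | ⟨h, _⟩ <;>
    nlinarith [Real.add_one_le_exp x, Real.add_one_le_exp (-x),
      Real.exp_pos x, Real.exp_pos (-x)]

lemma aux_integrable_mul {Ω : Type*} [MeasurableSpace Ω] (μ : Measure Ω)
    [IsProbabilityMeasure μ] (X : Ω → ℝ) (hX : Measurable X)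
    (hint : ∀ l : ℝ, Integrable (fun ω => Real.exp (l * X ω)) μ) (l : ℝ) :
    Integrable (fun ω => X ω * Real.exp (l * X ω)) μ := by
  refine Integrable.mono' (((hint (l+1)).add (hint (l-1)))) ?_ ?_
  · exact (hX.mul ((hX.const_mul l).exp)).aestronglyMeasurable
  · refine Filter.Eventually.of_forall fun ω => ?_
    have h1 : ‖X ω * Real.exp (l * X ω)‖ = |X ω| * Real.exp (l * X ω) := by
      rw [norm_mul, Real.norm_eq_abs, Real.norm_eq_abs, abs_of_pos (Real.exp_pos _)]
    rw [h1]
    calc |X ω| * Real.exp (l * X ω)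
        ≤ (Real.exp (X ω) + Real.exp (-X ω)) * Real.exp (l * X ω) :=
          mul_le_mul_of_nonneg_right aux_abs_le (Real.exp_pos _).le
      _ = Real.exp ((l+1) * X ω) + Real.exp ((l-1) * X ω) := by
          rw [add_mul, ← Real.exp_add, ← Real.exp_add]; ring_nf

lemma aux_hasDerivAt {Ω : Type*} [MeasurableSpace Ω] (μ : Measure Ω)
    [IsProbabilityMeasure μ] (X : Ω → ℝ) (hX : Measurable X)
    (hint : ∀ l : ℝ, Integrable (fun ω => Real.exp (l * X ω)) μ) (l : ℝ) :
    HasDerivAt (fun t => ∫ ω, Real.exp (t * X ω) ∂μ)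
      (∫ ω, X ω * Real.exp (l * X ω) ∂μ) l := by
  have hbound : Integrable (fun ω => (Real.exp ((l+2) * X ω) + Real.exp (l * X ω)) +
      (Real.exp (l * X ω) + Real.exp ((l-2) * X ω))) μ :=
    ((hint (l+2)).add (hint l)).add ((hint l).add (hint (l-2)))
  have key := hasDerivAt_integral_of_dominated_loc_of_deriv_le (𝕜 := ℝ)
    (F := fun t ω => Real.exp (t * X ω)) (F' := fun t ω => X ω * Real.exp (t * X ω))
    (x₀ := l) (s := Metric.ball l 1) (Metric.ball_mem_nhds l one_pos)
    (Filter.Eventually.of_forall fun t => ((hX.const_mul t).exp).aestronglyMeasurable)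
    (hint l) ((hX.mul ((hX.const_mul l).exp)).aestronglyMeasurable)
    (Filter.Eventually.of_forall fun ω => ?_) hbound
    (Filter.Eventually.of_forall fun ω => ?_)
  · exact key.2
  · intro t ht
    have h1 : ‖X ω * Real.exp (t * X ω)‖ = |X ω| * Real.exp (t * X ω) := by
      rw [norm_mul, Real.norm_eq_abs, Real.norm_eq_abs, abs_of_pos (Real.exp_pos _)]
    rw [h1]
    rw [Metric.mem_ball, Real.dist_eq, abs_lt] at ht
    calc |X ω| * Real.exp (t * X ω)
        ≤ (Real.exp (X ω) + Real.exp (-X ω)) * Real.exp (t * X ω) :=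
          mul_le_mul_of_nonneg_right aux_abs_le (Real.exp_pos _).le
      _ = Real.exp ((t+1) * X ω) + Real.exp ((t-1) * X ω) := by
          rw [add_mul, ← Real.exp_add, ← Real.exp_add]; ring_nf
      _ ≤ (Real.exp ((l+2) * X ω) + Real.exp (l * X ω)) +
          (Real.exp (l * X ω) + Real.exp ((l-2) * X ω)) := by
          have b1 := aux_exp_between (u := l) (s := t+1) (v := l+2) (x := X ω)
            (by linarith) (by linarith)
          have b2 := aux_exp_between (u := l-2) (s := t-1) (v := l) (x := X ω)
            (by linarith) (by linarith)
          linarith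
  · intro t _
    have h := (hasDerivAt_mul_const (x := t) (X ω)).exp
    simpa [mul_comm] using h

lemma aux_key_bound {a δ l x : ℝ} (hδ : 0 < δ) (hl : l < 0) (hx : a ≤ x) :
    (x - a) * Real.exp (l * x) ≤
      δ * Real.exp (l * x) + (2 / (-l)) * Real.exp (l * (a + δ/2)) := by
  have hl' : 0 < -l := by linarith
  rcases le_or_gt (x - a) δ with h | h
  · have h2 : 0 < (2 / (-l)) * Real.exp (l * (a + δ/2)) := by positivity
    nlinarith [Real.exp_pos (l * x)]
  · have hxapos : 0 < x - a := lt_trans hδ h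
    have htpos : 0 < (-l) * (x - a) / 2 := by
      apply div_pos (mul_pos hl' hxapos) two_pos
    have h1 : ((-l) * (x - a) / 2) * Real.exp (-((-l) * (x - a) / 2)) ≤ 1 := by
      calc ((-l) * (x - a) / 2) * Real.exp (-((-l) * (x - a) / 2))
          ≤ Real.exp ((-l) * (x - a) / 2) * Real.exp (-((-l) * (x - a) / 2)) := by
            have := Real.add_one_le_exp ((-l) * (x - a) / 2)
            apply mul_le_mul_of_nonneg_right (by linarith) (Real.exp_pos _).le
        _ = 1 := by rw [← Real.exp_add]; simp
    have hxa : (x - a) * Real.exp (-((-l) * (x - a) / 2)) ≤ 2 / (-l) := by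
      have hx2 : x - a = 2 / (-l) * ((-l) * (x - a) / 2) := by
        have hlne : l ≠ 0 := hl.ne
        field_simp
      calc (x - a) * Real.exp (-((-l) * (x - a) / 2))
          = 2 / (-l) * (((-l) * (x - a) / 2) * Real.exp (-((-l) * (x - a) / 2))) := by
            nth_rewrite 1 [hx2]
            rw [mul_assoc]
        _ ≤ 2 / (-l) * 1 := mul_le_mul_of_nonneg_left h1 (by positivity)
        _ = 2 / (-l) := mul_one _
    have hsplit : (x - a) * Real.exp (l * x) =
        ((x - a) * Real.exp (-((-l) * (x - a) / 2))) * Real.exp (l * (a + (x - a)/2)) := by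
      rw [mul_assoc, ← Real.exp_add]
      congr 2
      ring
    have hmono : Real.exp (l * (a + (x - a)/2)) ≤ Real.exp (l * (a + δ/2)) := by
      apply Real.exp_le_exp.2
      have : a + δ/2 ≤ a + (x - a)/2 := by linarith
      nlinarith
    have h3 : (x - a) * Real.exp (l * x) ≤ (2 / (-l)) * Real.exp (l * (a + δ/2)) := by
      rw [hsplit]
      apply mul_le_mul hxa hmono (Real.exp_pos _).le (by positivity)
    nlinarith [Real.exp_pos (l * x)]

theorem deriv_cgf_ge_essInf {Ω : Type*} [MeasurableSpace Ω] (μ : Measure Ω)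
    [IsProbabilityMeasure μ] (X : Ω → ℝ) (hX : Measurable X)
    (hint : ∀ l : ℝ, Integrable (fun ω => Real.exp (l * X ω)) μ)
    (Λ : ℝ → ℝ) (hΛ : ∀ l : ℝ, Λ l = Real.log (∫ ω, Real.exp (l * X ω) ∂μ)) :
    (∀ l : ℝ, essInf (fun ω => (X ω : EReal)) μ ≤ (↑(deriv Λ l) : EReal)) ∧
    (∀ a : ℝ, essInf (fun ω => (X ω : EReal)) μ = (a : EReal) →
      Tendsto (deriv Λ) atBot (nhds a)) := by
  set M : ℝ → ℝ := fun l => ∫ ω, Real.exp (l * X ω) ∂μ with hM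
  set N : ℝ → ℝ := fun l => ∫ ω, X ω * Real.exp (l * X ω) ∂μ with hN
  have hMpos : ∀ l, 0 < M l := fun l => integral_exp_pos (hint l)
  have hderiv : ∀ l, deriv Λ l = N l / M l := by
    intro l
    have hfun : Λ = fun t => Real.log (∫ ω, Real.exp (t * X ω) ∂μ) := funext hΛ
    rw [hfun]
    exact ((aux_hasDerivAt μ X hX hint l).log (hMpos l).ne').deriv
  have hae := ae_essInf_le (f := fun ω => (X ω : EReal)) (μ := μ)
  -- lower bound lemma
  have hge : ∀ (b : ℝ) (l : ℝ), (∀ᵐ ω ∂μ, b ≤ X ω) → b ≤ deriv Λ l := by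
    intro b l hb
    rw [hderiv l, le_div_iff₀ (hMpos l)]
    have hmono := integral_mono_ae ((hint l).const_mul b)
      (aux_integrable_mul μ X hX hint l)
      (hb.mono fun ω h => mul_le_mul_of_nonneg_right h (Real.exp_pos _).le)
    rwa [integral_const_mul] at hmono
  constructor
  · intro l
    by_cases hbot : essInf (fun ω => (X ω : EReal)) μ = ⊥
    · simp [hbot]
    by_cases htop : essInf (fun ω => (X ω : EReal)) μ = ⊤
    · exfalso
      obtain ⟨ω, hω⟩ := hae.exists
      rw [htop] at hω
      exact (EReal.coe_lt_top (X ω)).not_ge (le_of_eq (top_le_iff.1 hω).symm)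
    · set b := (essInf (fun ω => (X ω : EReal)) μ).toReal with hb
      have hIb : essInf (fun ω => (X ω : EReal)) μ = (b : EReal) :=
        (EReal.coe_toReal htop hbot).symm
      rw [hIb]
      refine EReal.coe_le_coe_iff.2 (hge b l ?_)
      rw [hIb] at hae
      exact hae.mono fun ω h => EReal.coe_le_coe_iff.1 h
  · intro a ha
    have haeX : ∀ᵐ ω ∂μ, a ≤ X ω := by
      rw [ha] at hae
      exact hae.mono fun ω h => EReal.coe_le_coe_iff.1 h
    have hlow : ∀ l, a ≤ deriv Λ l := fun l => hge a l haeX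
    have hmeas_pos : ∀ η : ℝ, 0 < η → 0 < μ {ω | X ω ≤ a + η} := by
      intro η hη
      by_contra h
      push_neg at h
      have h0 : μ {ω | X ω ≤ a + η} = 0 := le_antisymm h (by simp)
      have hae2 : ∀ᵐ ω ∂μ, a + η < X ω := by
        rw [ae_iff]
        simpa [not_lt] using h0
      have hle := le_essInf_of_ae_le (μ := μ) (f := fun ω => (X ω : EReal))
        ((a + η : ℝ) : EReal) (hae2.mono fun ω h => EReal.coe_le_coe_iff.2 h.le)
      rw [ha] at hle
      have : a + η ≤ a := EReal.coe_le_coe_iff.1 hle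
      linarith
    rw [Metric.tendsto_nhds]
    intro ε hε
    rw [eventually_atBot]
    set δ := ε / 3 with hδdef
    have hδ : 0 < δ := by positivity
    set s := {ω | X ω ≤ a + δ/2} with hs
    have hsm : MeasurableSet s := measurableSet_le hX measurable_const
    set c := (μ s).toReal with hc
    have hcpos : 0 < c :=
      ENNReal.toReal_pos (hmeas_pos (δ/2) (by positivity)).ne' (measure_ne_top μ s)
    refine ⟨-(1 + 2 / (c * δ)), fun l hl => ?_⟩
    have hcd : 0 < 2 / (c * δ) := by positivity
    have hl0 : l < 0 := by linarith
    have hl' : 0 < -l := by linarith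
    -- integrability
    have hint1 : Integrable (fun ω => (X ω - a) * Real.exp (l * X ω)) μ := by
      have := (aux_integrable_mul μ X hX hint l).sub ((hint l).const_mul a)
      simp only [sub_mul]; exact this
    -- step 2: numerator bound
    have step2 : ∫ ω, (X ω - a) * Real.exp (l * X ω) ∂μ ≤
        δ * M l + (2 / (-l)) * Real.exp (l * (a + δ/2)) := by
      have hg : Integrable (fun ω => δ * Real.exp (l * X ω) +
          (2 / (-l)) * Real.exp (l * (a + δ/2))) μ :=
        ((hint l).const_mul δ).add (integrable_const _)
      have hmono := integral_mono_ae hint1 hg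
        (haeX.mono fun ω h => aux_key_bound hδ hl0 h)
      rwa [integral_add ((hint l).const_mul δ) (integrable_const _),
        integral_const_mul, integral_const, probReal_univ,
        one_smul] at hmono
    -- step 3: denominator bound
    have step3 : c * Real.exp (l * (a + δ/2)) ≤ M l := by
      have hind : ∀ ω, s.indicator (fun _ => Real.exp (l * (a + δ/2))) ω ≤
          Real.exp (l * X ω) := by
        intro ω
        by_cases hωs : ω ∈ s
        · rw [Set.indicator_of_mem hωs]
          apply Real.exp_le_exp.2
          have hxs : X ω ≤ a + δ/2 := hωs
          nlinarith
        · rw [Set.indicator_of_notMem hωs]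
          exact (Real.exp_pos _).le
      have hmono := integral_mono
        ((integrable_const (Real.exp (l * (a + δ/2)))).indicator hsm)
        (hint l) hind
      rw [integral_indicator_const _ hsm, smul_eq_mul, measureReal_def] at hmono
      rw [hc]
      linarith
    -- rewrite numerator
    have hNsub : ∫ ω, (X ω - a) * Real.exp (l * X ω) ∂μ = N l - a * M l := by
      have h1 : (fun ω => (X ω - a) * Real.exp (l * X ω)) =
          fun ω => X ω * Real.exp (l * X ω) - a * Real.exp (l * X ω) := by
        funext ω; ring
      rw [h1, integral_sub (aux_integrable_mul μ X hX hint l) ((hint l).const_mul a),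
        integral_const_mul]
    -- combine
    have hEle : Real.exp (l * (a + δ/2)) ≤ M l / c := (le_div_iff₀ hcpos).2 (by linarith [step3])
    have final : deriv Λ l - a ≤ δ + 2 / ((-l) * c) := by
      rw [hderiv l]
      have h2 : N l / M l - a = (N l - a * M l) / M l := by
        rw [eq_div_iff (hMpos l).ne', sub_mul, div_mul_cancel₀ _ (hMpos l).ne']
      rw [h2, div_le_iff₀ (hMpos l)]
      have h3 : (2 / (-l)) * Real.exp (l * (a + δ/2)) ≤ (2 / (-l)) * (M l / c) :=
        mul_le_mul_of_nonneg_left hEle (by positivity)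
      have h4 : (2 / (-l)) * (M l / c) = 2 / ((-l) * c) * M l := by
        field_simp
      nlinarith [step2, hNsub, hMpos l]
    have hld : 2 / (c * δ) ≤ -l := by linarith
    have h2d : 2 / ((-l) * c) ≤ δ := by
      rw [div_le_iff₀ (by positivity)]
      have := (div_le_iff₀ (by positivity : (0:ℝ) < c * δ)).1 hld
      nlinarith
    rw [Real.dist_eq, abs_lt]
    constructor
    · have := hlow l; linarith
    · linarith [final, h2d, hδdef]
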